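/- For every integer t ≥ 0, let H_t = 27 + 7·Σ_{j=0}^{t−1} 2^{6j+8} and k = 3t + 2. Then two Collatz operations applied to H_t yield 2^{2k+1} − 1: the first step has v₂(3·H_t + 1) = 1, and writing m = (3·H_t + 1)/2, the second step has v₂(3m + 1) = 2 with (3m + 1)/4 = 2^{2k+1} − 1; that is, C(C(H_t)) = 2^{2(3t+2)+1} − 1. -/

import Mathlib

/-- The Collatz operation on odd positive integers:
`C n = (3n+1)/2^{v₂(3n+1)}`. -/
def collatzC (n : ℕ) : ℕ := (3 * n + 1) / 2 ^ padicValNat 2 (3 * n + 1)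

lemma geom_key (t : ℕ) : 63 * ∑ j ∈ Finset.range t, 2 ^ (6 * j + 6) + 64 = 2 ^ (6 * t + 6) := by
  induction t with
  | zero => simp
  | succ n ih =>
    rw [Finset.sum_range_succ]
    have : (2:ℕ) ^ (6 * (n + 1) + 6) = 64 * 2 ^ (6 * n + 6) := by ring
    rw [this, ← ih]; ring

lemma val_two_mul_odd (m : ℕ) (k : ℕ) (h : ¬ 2 ∣ m) :
    padicValNat 2 (2 ^ k * m) = k := by
  have hm : m ≠ 0 := by rintro rfl; exact h ⟨0, rfl⟩
  haveI : Fact (Nat.Prime 2) := ⟨Nat.prime_two⟩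
  rw [padicValNat.mul (pow_ne_zero k two_ne_zero) hm, padicValNat.prime_pow,
    padicValNat.eq_zero_of_not_dvd h, add_zero]

set_option maxHeartbeats 1600000 in
theorem collatz_twice_of_H (t : ℕ) :
    padicValNat 2 (3 * (27 + 7 * ∑ j ∈ Finset.range t, 2 ^ (6 * j + 8)) + 1) = 1 ∧
    padicValNat 2
      (3 * ((3 * (27 + 7 * ∑ j ∈ Finset.range t, 2 ^ (6 * j + 8)) + 1) / 2) + 1) = 2 ∧
    (3 * ((3 * (27 + 7 * ∑ j ∈ Finset.range t, 2 ^ (6 * j + 8)) + 1) / 2) + 1) / 4 =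
      2 ^ (2 * (3 * t + 2) + 1) - 1 ∧
    collatzC (collatzC (27 + 7 * ∑ j ∈ Finset.range t, 2 ^ (6 * j + 8))) =
      2 ^ (2 * (3 * t + 2) + 1) - 1 := by
  obtain ⟨a, ha, hg⟩ :
      ∃ a, (∑ j ∈ Finset.range t, 2 ^ (6 * j + 8) = 4 * a) ∧
        63 * a + 64 = 2 * 2 ^ (6 * t + 5) := by
    refine ⟨∑ j ∈ Finset.range t, 2 ^ (6 * j + 6), ?_, ?_⟩
    · rw [Finset.mul_sum]
      exact Finset.sum_congr rfl fun j _ => by ring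
    · rw [geom_key t]; ring
  have hexp : 2 * (3 * t + 2) + 1 = 6 * t + 5 := by ring
  have hple : (32:ℕ) ≤ 2 ^ (6 * t + 5) := by
    calc (32:ℕ) = 2 ^ 5 := by norm_num
    _ ≤ 2 ^ (6 * t + 5) := Nat.pow_le_pow_right (by norm_num) (by omega)
  have hpe : 2 ∣ 2 ^ (6 * t + 5) := dvd_pow_self 2 (by omega)
  rw [ha, hexp]
  clear ha hexp
  generalize 2 ^ (6 * t + 5) = p at hg hple hpe ⊢
  have e1 : 3 * (27 + 7 * (4 * a)) + 1 = 2 * (41 + 42 * a) := by ring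
  have e2 : 2 * (41 + 42 * a) / 2 = 41 + 42 * a := by omega
  have e3 : 3 * (41 + 42 * a) + 1 = 2 ^ 2 * (p - 1) := by omega
  have hodd1 : ¬ 2 ∣ (41 + 42 * a) := by omega
  have hodd2 : ¬ 2 ∣ (p - 1) := by omega
  have hv1 : padicValNat 2 (2 * (41 + 42 * a)) = 1 := by
    simpa using val_two_mul_odd (41 + 42 * a) 1 hodd1
  have hv2 := val_two_mul_odd (p - 1) 2 hodd2
  refine ⟨by rw [e1]; exact hv1, by rw [e1, e2, e3]; exact hv2, ?_, ?_⟩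
  · rw [e1, e2, e3]; omega
  · simp only [collatzC]; rw [e1, hv1, pow_one, e2, e3, hv2]; omega
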